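/- For every γ > 0 there exists a constant C > 0, independent of j and x, such that for all j ∈ ℤ and all x ∈ ℝ³, Σ_{k∈ℤ³} ‖x_{j,k}⁻¹∗x‖^γ / (1 + ‖2^j∘(x_{j,k}⁻¹∗x)‖)^{5+γ} ≤ C·2^{−jγ}. -/

import Mathlib

noncomputable section

open MeasureTheory

/-- The underlying space of the Heisenberg group: `ℝ³`. -/
abbrev H3 : Type := ℝ × ℝ × ℝ

/-- The Heisenberg group law `(p,q,r)∗(p',q',r') = (p+p', q+q', r+r'+2(qp'−pq'))`. -/
def Hmul (x y : H3) : H3 :=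
  (x.1 + y.1, x.2.1 + y.2.1, x.2.2 + y.2.2 + 2 * (x.2.1 * y.1 - x.1 * y.2.1))

/-- The inverse for the Heisenberg group law. -/
def Hinv (x : H3) : H3 := (-x.1, -x.2.1, -x.2.2)

/-- The homogeneous (gauge) norm `‖(p,q,r)‖ = ((p²+q²)²+r²)^(1/4)`. -/
def Hnorm (x : H3) : ℝ := ((x.1 ^ 2 + x.2.1 ^ 2) ^ 2 + x.2.2 ^ 2) ^ ((1 : ℝ) / 4)

/-- The gauge distance `δ(x,y) = ‖x⁻¹∗y‖`. -/
def Hdist (x y : H3) : ℝ := Hnorm (Hmul (Hinv x) y)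

/-- The gauge ball `B(x,r)`. -/
def Hball (x : H3) (r : ℝ) : Set H3 := {y | Hdist x y < r}

/-- The dilation `λ∘(p,q,r) = (λp, λq, λ²r)`. -/
def Hdil (l : ℝ) (x : H3) : H3 := (l * x.1, l * x.2.1, l ^ 2 * x.2.2)

/-- A lattice point of `ℤ³` seen inside `ℝ³`. -/
def latticePt (k : ℤ × ℤ × ℤ) : H3 := ((k.1 : ℝ), (k.2.1 : ℝ), (k.2.2 : ℝ))

/-- The dyadic point `x_{j,k} = 2^{−j}∘k`. -/
def xjk (j : ℤ) (k : ℤ × ℤ × ℤ) : H3 := Hdil ((2 : ℝ) ^ (-j)) (latticePt k)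

open scoped ENNReal

/-! ### Auxiliary lemmas -/

lemma hnorm_nonneg (x : H3) : 0 ≤ Hnorm x := Real.rpow_nonneg (by positivity) _

lemma hnorm_pow4 (x : H3) : Hnorm x ^ (4:ℕ) = (x.1 ^ 2 + x.2.1 ^ 2) ^ 2 + x.2.2 ^ 2 := by
  have h : (0:ℝ) ≤ (x.1 ^ 2 + x.2.1 ^ 2) ^ 2 + x.2.2 ^ 2 := by positivity
  rw [Hnorm, ← Real.rpow_natCast (_ ^ ((1:ℝ)/4)) 4, ← Real.rpow_mul h]
  norm_num

lemma hdil_norm {l : ℝ} (hl : 0 ≤ l) (x : H3) : Hnorm (Hdil l x) = l * Hnorm x := by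
  unfold Hnorm Hdil
  have h : ((l*x.1)^2 + (l*x.2.1)^2)^2 + (l^2*x.2.2)^2
      = l^4 * ((x.1^2+x.2.1^2)^2 + x.2.2^2) := by ring
  simp only
  rw [h, Real.mul_rpow (by positivity) (by positivity)]
  congr 1
  rw [← Real.rpow_natCast l 4, ← Real.rpow_mul hl]
  norm_num

lemma hdil_mul (l : ℝ) (a b : H3) : Hdil l (Hmul a b) = Hmul (Hdil l a) (Hdil l b) := by
  simp only [Hdil, Hmul, Prod.mk.injEq]
  refine ⟨by ring, by ring, by ring⟩

lemma hdil_inv (l : ℝ) (a : H3) : Hdil l (Hinv a) = Hinv (Hdil l a) := by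
  simp only [Hdil, Hinv, Prod.mk.injEq]
  refine ⟨by ring, by ring, by ring⟩

lemma hdil_xjk (j : ℤ) (k : ℤ×ℤ×ℤ) : Hdil ((2:ℝ)^j) (xjk j k) = latticePt k := by
  have h1 : (2:ℝ)^j * (2:ℝ)^(-j) = 1 := by
    rw [← zpow_add₀ (two_ne_zero)]; simp
  simp only [xjk, Hdil, latticePt, Prod.mk.injEq]
  refine ⟨by rw [← mul_assoc, h1, one_mul], by rw [← mul_assoc, h1, one_mul], ?_⟩
  rw [← mul_assoc, ← mul_pow, h1, one_pow, one_mul]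

lemma hmul_inv_lattice (k : ℤ×ℤ×ℤ) (X : H3) :
    Hmul (Hinv (latticePt k)) X =
      (X.1 - (k.1:ℝ), X.2.1 - (k.2.1:ℝ),
        (X.2.2 + 2*((k.1:ℝ)*X.2.1 - (k.2.1:ℝ)*X.1)) - (k.2.2:ℝ)) := by
  simp only [Hmul, Hinv, latticePt, Prod.mk.injEq]
  refine ⟨by ring, by ring, by ring⟩

/-! ### The one-dimensional lattice sum -/

def phi (w : ℝ) : ℝ := (1+|w|) ^ (-(5/4) : ℝ)

lemma phi_nonneg (w : ℝ) : 0 ≤ phi w := Real.rpow_nonneg (by positivity) _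

lemma phi0_summable : Summable (fun i : ℤ => phi i) := by
  have hg : Summable (fun i : ℤ => 1 / |(i:ℝ) + 1/2| ^ ((5/4):ℝ)) :=
    (Real.summable_one_div_int_add_rpow (1/2) (5/4)).mpr (by norm_num)
  apply hg.of_nonneg_of_le (fun i => phi_nonneg _)
  intro i
  have habs : (0:ℝ) < |(i:ℝ) + 1/2| := by
    rcases le_or_gt 0 i with h | h
    · have : (0:ℝ) ≤ (i:ℝ) := by exact_mod_cast h
      rw [abs_of_pos (by linarith)]; linarith
    · have hi : i ≤ -1 := by omega
      have : (i:ℝ) ≤ -1 := by exact_mod_cast hi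
      rw [abs_of_neg (by linarith)]; linarith
  have hle : |(i:ℝ) + 1/2| ≤ 1 + |(i:ℝ)| := by
    calc |(i:ℝ) + 1/2| ≤ |(i:ℝ)| + |(1/2:ℝ)| := abs_add_le _ _
      _ ≤ 1 + |(i:ℝ)| := by rw [abs_of_pos (by norm_num : (0:ℝ) < 1/2)]; linarith
  rw [phi, Real.rpow_neg (by positivity), inv_eq_one_div]
  apply one_div_le_one_div_of_le (Real.rpow_pos_of_pos habs _)
  exact Real.rpow_le_rpow (le_of_lt habs) hle (by norm_num)

def c1 : ℝ := ∑' i : ℤ, phi i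

lemma c1_ge_one : 1 ≤ c1 := by
  have h := Summable.le_tsum phi0_summable 0 (fun i _ => phi_nonneg _)
  simpa [phi, c1] using h

lemma c1_pos : 0 < c1 := lt_of_lt_of_le one_pos c1_ge_one

lemma phi_shift_le (θ : ℝ) (n : ℤ) : phi (θ - n) ≤ 4 * phi ((n - round θ : ℤ) : ℝ) := by
  set m := round θ with hm
  have hround : |θ - (m:ℝ)| ≤ 1/2 := abs_sub_round θ
  have hcast : ((n - m : ℤ) : ℝ) = (n:ℝ) - (m:ℝ) := by push_cast; ring
  have h1 : (1 + |((n - m : ℤ) : ℝ)|)/2 ≤ 1 + |θ - (n:ℝ)| := by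
    rw [hcast]
    have : |(n:ℝ) - (m:ℝ)| ≤ |θ - (n:ℝ)| + 1/2 := by
      calc |(n:ℝ) - (m:ℝ)| = |((n:ℝ) - θ) + (θ - (m:ℝ))| := by ring_nf
        _ ≤ |(n:ℝ) - θ| + |θ - (m:ℝ)| := abs_add_le _ _
        _ ≤ |θ - (n:ℝ)| + 1/2 := by rw [abs_sub_comm]; linarith
    linarith [abs_nonneg (θ - (n:ℝ))]
  have hpos : (0:ℝ) < (1 + |((n - m : ℤ) : ℝ)|)/2 := by positivity
  have h2 : phi (θ - n) ≤ ((1 + |((n - m : ℤ) : ℝ)|)/2) ^ (-(5/4):ℝ) :=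
    Real.rpow_le_rpow_of_nonpos hpos h1 (by norm_num)
  refine h2.trans ?_
  rw [Real.div_rpow (by positivity) (by norm_num : (0:ℝ) ≤ 2)]
  rw [div_eq_mul_inv, mul_comm]
  unfold phi
  apply mul_le_mul _ le_rfl (Real.rpow_nonneg (by positivity) _) (by norm_num)
  rw [← Real.rpow_neg (by norm_num : (0:ℝ) ≤ 2), neg_neg]
  calc (2:ℝ) ^ ((5/4):ℝ) ≤ (2:ℝ) ^ ((2:ℕ):ℝ) :=
        Real.rpow_le_rpow_of_exponent_le one_le_two (by norm_num)
    _ = 4 := by rw [Real.rpow_natCast]; norm_num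

lemma oneD (θ : ℝ) :
    ∑' n : ℤ, ENNReal.ofReal (phi (θ - n)) ≤ ENNReal.ofReal (4 * c1) := by
  have step1 : ∑' n : ℤ, ENNReal.ofReal (phi (θ - n))
      ≤ ∑' n : ℤ, ENNReal.ofReal (4 * phi ((n - round θ : ℤ) : ℝ)) :=
    ENNReal.tsum_le_tsum fun n => ENNReal.ofReal_le_ofReal (phi_shift_le θ n)
  refine step1.trans ?_
  have step2 : ∑' n : ℤ, ENNReal.ofReal (4 * phi ((n - round θ : ℤ) : ℝ))
      = ∑' i : ℤ, ENNReal.ofReal (4 * phi (i : ℝ)) :=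
    (Equiv.subRight (round θ)).tsum_eq (fun i : ℤ => ENNReal.ofReal (4 * phi (i:ℝ)))
  rw [step2, ← ENNReal.ofReal_tsum_of_nonneg (fun i => mul_nonneg (by norm_num) (phi_nonneg _))
      (phi0_summable.mul_left 4), tsum_mul_left]
  rfl

/-! ### The core pointwise bound -/

lemma core_bound (y : H3) :
    ((1 + Hnorm y) ^ (5:ℝ))⁻¹ ≤ 32 * (phi y.1 * phi y.2.1 * phi y.2.2) := by
  obtain ⟨p, q, r⟩ := y
  set N := Hnorm (p, q, r) with hNdef
  have hN : 0 ≤ N := hnorm_nonneg _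
  have h4 : N ^ (4:ℕ) = (p ^ 2 + q ^ 2) ^ 2 + r ^ 2 := hnorm_pow4 (p, q, r)
  have hpq : p ^ 2 + q ^ 2 ≤ N ^ 2 := by
    nlinarith [sq_nonneg r, sq_nonneg (N^2 - (p^2+q^2)), sq_nonneg (N^2 + (p^2+q^2)),
      sq_nonneg p, sq_nonneg q, sq_nonneg N]
  have hr : |r| ≤ N ^ 2 := by
    nlinarith [sq_nonneg (N^2 - |r|), sq_nonneg (N^2 + |r|), abs_nonneg r, sq_abs r,
      sq_nonneg N, sq_nonneg (p^2+q^2)]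
  have hs : |p| + |q| ≤ 2 * N := by
    nlinarith [sq_nonneg (|p| - |q|), sq_abs p, sq_abs q, abs_nonneg p, abs_nonneg q, hpq, hN]
  have h1 : (1+|p|) * (1+|q|) ≤ (2+2*N)^2 := by
    nlinarith [sq_nonneg (|p| - |q|), sq_abs p, sq_abs q, abs_nonneg p, abs_nonneg q,
      hpq, hs, hN]
  have h2 : 1 + |r| ≤ (1+N)^2 := by nlinarith [hr, hN]
  have hP : (1+|p|) * (1+|q|) * (1+|r|) ≤ (2+2*N)^(4:ℕ) := by
    have h3 : (1+|p|) * (1+|q|) * (1+|r|) ≤ (2+2*N)^2 * (1+N)^2 :=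
      mul_le_mul h1 h2 (by positivity) (by positivity)
    nlinarith [h3, hN, sq_nonneg ((1+N)^2)]
  have hPpos : (0:ℝ) < (1+|p|) * (1+|q|) * (1+|r|) := by positivity
  have h5 : ((1+|p|) * (1+|q|) * (1+|r|)) ^ ((5:ℝ)/4) ≤ 32 * (1+N) ^ (5:ℝ) := by
    have step := Real.rpow_le_rpow (le_of_lt hPpos) hP (by norm_num : (0:ℝ) ≤ 5/4)
    have e1 : ((2+2*N)^(4:ℕ) : ℝ) ^ ((5:ℝ)/4) = (2+2*N) ^ (5:ℝ) := by
      rw [← Real.rpow_natCast (2+2*N) 4, ← Real.rpow_mul (by positivity)]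
      norm_num
    have e2 : (2+2*N) ^ (5:ℝ) = 32 * (1+N) ^ (5:ℝ) := by
      have h22 : (2:ℝ)+2*N = 2 * (1+N) := by ring
      rw [h22, Real.mul_rpow (by norm_num) (by positivity)]
      congr 1
      have h55 : (5:ℝ) = ((5:ℕ):ℝ) := by norm_num
      rw [h55, Real.rpow_natCast]; norm_num
    rw [e1, e2] at step
    exact step
  have hprod : phi p * phi q * phi r = (((1+|p|) * (1+|q|) * (1+|r|)) ^ ((5:ℝ)/4))⁻¹ := by
    unfold phi
    rw [← Real.mul_rpow (by positivity) (by positivity),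
        ← Real.mul_rpow (by positivity) (by positivity),
        Real.rpow_neg (by positivity)]
  have h6 : (0:ℝ) < ((1+|p|) * (1+|q|) * (1+|r|)) ^ ((5:ℝ)/4) := Real.rpow_pos_of_pos hPpos _
  have h7 : (0:ℝ) < (1+N) ^ (5:ℝ) := Real.rpow_pos_of_pos (by linarith) _
  show ((1 + N) ^ (5:ℝ))⁻¹ ≤ 32 * (phi p * phi q * phi r)
  rw [hprod, inv_eq_one_div, inv_eq_one_div, mul_one_div, div_le_div_iff₀ h7 h6]
  linarith [h5]
/-! ### Pointwise reduction -/

lemma pointwise_bound (γ : ℝ) (hγ : 0 < γ) (j : ℤ) (x : H3) (k : ℤ×ℤ×ℤ) :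
    Hnorm (Hmul (Hinv (xjk j k)) x) ^ γ /
        (1 + Hnorm (Hdil ((2:ℝ)^j) (Hmul (Hinv (xjk j k)) x))) ^ (5 + γ) ≤
      (2:ℝ) ^ (-(j:ℝ)*γ) * (32 * (phi ((Hdil ((2:ℝ)^j) x).1 - (k.1:ℝ)) *
        phi ((Hdil ((2:ℝ)^j) x).2.1 - (k.2.1:ℝ)) *
        phi (((Hdil ((2:ℝ)^j) x).2.2 + 2*((k.1:ℝ)*(Hdil ((2:ℝ)^j) x).2.1 -
          (k.2.1:ℝ)*(Hdil ((2:ℝ)^j) x).1)) - (k.2.2:ℝ)))) := by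
  set y := Hmul (Hinv (xjk j k)) x with hy
  set X := Hdil ((2:ℝ)^j) x with hX
  have hY : Hdil ((2:ℝ)^j) y = Hmul (Hinv (latticePt k)) X := by
    rw [hy, hX, hdil_mul, hdil_inv, hdil_xjk]
  set u := Hnorm (Hdil ((2:ℝ)^j) y) with hu
  have hu0 : 0 ≤ u := hnorm_nonneg _
  have h2j : (0:ℝ) < (2:ℝ)^j := zpow_pos two_pos j
  have h2jn : (0:ℝ) < (2:ℝ)^(-j) := zpow_pos two_pos (-j)
  have h1u : (0:ℝ) < 1 + u := by linarith
  have hw : Hnorm y = (2:ℝ)^(-j) * u := by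
    rw [hu, hdil_norm (le_of_lt h2j) y, ← mul_assoc,
      ← zpow_add₀ (two_ne_zero : (2:ℝ) ≠ 0)]
    simp
  have lhs_eq : Hnorm y ^ γ / (1+u) ^ (5+γ)
      = ((2:ℝ)^(-j)) ^ γ * (u ^ γ / (1+u) ^ (5+γ)) := by
    rw [hw, Real.mul_rpow (le_of_lt h2jn) hu0, mul_div_assoc]
  have hfrac : u ^ γ / (1+u) ^ (5+γ) ≤ ((1+u) ^ (5:ℝ))⁻¹ := by
    have hnum : u ^ γ ≤ (1+u) ^ γ := Real.rpow_le_rpow hu0 (by linarith) (le_of_lt hγ)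
    have hd : (0:ℝ) < (1+u) ^ (5+γ) := Real.rpow_pos_of_pos h1u _
    have hγp : (0:ℝ) < (1+u) ^ γ := Real.rpow_pos_of_pos h1u _
    have e : (1+u) ^ ((5:ℝ)+γ) = (1+u) ^ (5:ℝ) * (1+u) ^ γ := Real.rpow_add h1u 5 γ
    calc u ^ γ / (1+u) ^ (5+γ) ≤ (1+u) ^ γ / (1+u) ^ (5+γ) := by gcongr
      _ = ((1+u) ^ (5:ℝ))⁻¹ := by
          rw [e, mul_comm, ← div_div, div_self (ne_of_gt hγp), one_div]
  have hDγ : ((2:ℝ)^(-j)) ^ γ = (2:ℝ) ^ (-(j:ℝ)*γ) := by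
    rw [← Real.rpow_intCast 2 (-j), ← Real.rpow_mul (by norm_num : (0:ℝ) ≤ 2)]
    congr 1
    push_cast
    ring
  have hu_eq : u = Hnorm (Hmul (Hinv (latticePt k)) X) := by rw [hu, hY]
  have hc := hmul_inv_lattice k X
  have e1 : (Hmul (Hinv (latticePt k)) X).1 = X.1 - (k.1:ℝ) := by rw [hc]
  have e2 : (Hmul (Hinv (latticePt k)) X).2.1 = X.2.1 - (k.2.1:ℝ) := by rw [hc]
  have e3 : (Hmul (Hinv (latticePt k)) X).2.2
      = (X.2.2 + 2*((k.1:ℝ)*X.2.1 - (k.2.1:ℝ)*X.1)) - (k.2.2:ℝ) := by rw [hc]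
  have core := core_bound (Hmul (Hinv (latticePt k)) X)
  rw [e1, e2, e3, ← hu_eq] at core
  have hpow_nonneg : (0:ℝ) ≤ ((2:ℝ)^(-j)) ^ γ := Real.rpow_nonneg (le_of_lt h2jn) _
  calc Hnorm y ^ γ / (1+u) ^ (5+γ)
      = ((2:ℝ)^(-j)) ^ γ * (u ^ γ / (1+u) ^ (5+γ)) := lhs_eq
    _ ≤ ((2:ℝ)^(-j)) ^ γ * ((1+u) ^ (5:ℝ))⁻¹ :=
        mul_le_mul_of_nonneg_left hfrac hpow_nonneg
    _ ≤ ((2:ℝ)^(-j)) ^ γ * (32 * (phi (X.1 - (k.1:ℝ)) * phi (X.2.1 - (k.2.1:ℝ)) *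
          phi ((X.2.2 + 2*((k.1:ℝ)*X.2.1 - (k.2.1:ℝ)*X.1)) - (k.2.2:ℝ)))) :=
        mul_le_mul_of_nonneg_left core hpow_nonneg
    _ = _ := by rw [hDγ]

lemma ofReal_split (d a b c : ℝ) (hd : 0 ≤ d) (ha : 0 ≤ a) (hb : 0 ≤ b) :
    ENNReal.ofReal (d * (32 * (a * b * c)))
      = ENNReal.ofReal (d * 32) *
        (ENNReal.ofReal a * ENNReal.ofReal b * ENNReal.ofReal c) := by
  rw [show d * (32 * (a * b * c)) = ((d * 32) * a) * b * c by ring,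
    ENNReal.ofReal_mul (by positivity), ENNReal.ofReal_mul (by positivity),
    ENNReal.ofReal_mul (by positivity)]
  ring


/-- For every `γ > 0` there is a constant `C > 0`, independent of `j` and `x`,
such that `Σ_{k∈ℤ³} ‖x_{j,k}⁻¹∗x‖^γ / (1 + ‖2^j∘(x_{j,k}⁻¹∗x)‖)^{5+γ} ≤ C·2^{−jγ}`. -/
theorem heisenberg_lattice_weighted_sum (γ : ℝ) (hγ : 0 < γ) :
    ∃ C : ℝ, 0 < C ∧ ∀ j : ℤ, ∀ x : H3,
      Summable (fun k : ℤ × ℤ × ℤ =>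
        Hnorm (Hmul (Hinv (xjk j k)) x) ^ γ /
          (1 + Hnorm (Hdil ((2 : ℝ) ^ j) (Hmul (Hinv (xjk j k)) x))) ^ (5 + γ)) ∧
      ∑' k : ℤ × ℤ × ℤ,
          Hnorm (Hmul (Hinv (xjk j k)) x) ^ γ /
            (1 + Hnorm (Hdil ((2 : ℝ) ^ j) (Hmul (Hinv (xjk j k)) x))) ^ (5 + γ) ≤
        C * (2 : ℝ) ^ (-(j : ℝ) * γ) := by
  refine ⟨2048 * c1 ^ 3, by have := c1_pos; positivity, ?_⟩
  intro j x
  set F : ℤ×ℤ×ℤ → ℝ := fun k =>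
    Hnorm (Hmul (Hinv (xjk j k)) x) ^ γ /
      (1 + Hnorm (Hdil ((2:ℝ)^j) (Hmul (Hinv (xjk j k)) x))) ^ (5 + γ) with hF
  have hFnn : ∀ k, 0 ≤ F k := by
    intro k
    apply div_nonneg (Real.rpow_nonneg (hnorm_nonneg _) _)
    apply Real.rpow_nonneg
    linarith [hnorm_nonneg (Hdil ((2:ℝ)^j) (Hmul (Hinv (xjk j k)) x))]
  set X := Hdil ((2:ℝ)^j) x with hX
  set D : ℝ := (2:ℝ) ^ (-(j:ℝ)*γ) with hD
  have hDpos : 0 < D := Real.rpow_pos_of_pos two_pos _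
  -- notation for the three one-dimensional factors
  set pa : ℤ → ℝ≥0∞ := fun k1 => ENNReal.ofReal (phi (X.1 - (k1:ℝ))) with hpa
  set pb : ℤ → ℝ≥0∞ := fun k2 => ENNReal.ofReal (phi (X.2.1 - (k2:ℝ))) with hpb
  set pc : ℤ → ℤ → ℤ → ℝ≥0∞ := fun k1 k2 k3 => ENNReal.ofReal
    (phi ((X.2.2 + 2*((k1:ℝ)*X.2.1 - (k2:ℝ)*X.1)) - (k3:ℝ))) with hpc
  set E1 : ℝ≥0∞ := ENNReal.ofReal (4 * c1) with hE1
  have hE1top : E1 ≠ ⊤ := ENNReal.ofReal_ne_top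
  have key : ∀ k : ℤ×ℤ×ℤ, ENNReal.ofReal (F k)
      ≤ ENNReal.ofReal (D * 32) * (pa k.1 * pb k.2.1 * pc k.1 k.2.1 k.2.2) := by
    intro k
    have h := pointwise_bound γ hγ j x k
    rw [← hX, ← hD] at h
    have h2 := ENNReal.ofReal_le_ofReal h
    refine le_trans (by exact h2) ?_
    rw [ofReal_split _ _ _ _ (le_of_lt hDpos) (phi_nonneg _) (phi_nonneg _)]
  -- sum the inner variable
  have sum_c : ∀ k1 k2 : ℤ, ∑' k3 : ℤ, pc k1 k2 k3 ≤ E1 := by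
    intro k1 k2
    exact oneD (X.2.2 + 2*((k1:ℝ)*X.2.1 - (k2:ℝ)*X.1))
  have sum_b : ∑' k2 : ℤ, pb k2 ≤ E1 := oneD X.2.1
  have sum_a : ∑' k1 : ℤ, pa k1 ≤ E1 := oneD X.1
  have total : ∑' k : ℤ×ℤ×ℤ, ENNReal.ofReal (F k)
      ≤ ENNReal.ofReal ((2048 * c1 ^ 3) * D) := by
    calc ∑' k : ℤ×ℤ×ℤ, ENNReal.ofReal (F k)
        ≤ ∑' k : ℤ×ℤ×ℤ, ENNReal.ofReal (D * 32) *
            (pa k.1 * pb k.2.1 * pc k.1 k.2.1 k.2.2) := ENNReal.tsum_le_tsum key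
      _ = ENNReal.ofReal (D * 32) *
            ∑' k : ℤ×ℤ×ℤ, pa k.1 * pb k.2.1 * pc k.1 k.2.1 k.2.2 :=
          ENNReal.tsum_mul_left
      _ ≤ ENNReal.ofReal (D * 32) * (E1 * E1 * E1) := by
          apply mul_le_mul_right
          calc ∑' k : ℤ×ℤ×ℤ, pa k.1 * pb k.2.1 * pc k.1 k.2.1 k.2.2
              = ∑' k1 : ℤ, ∑' w : ℤ×ℤ, pa k1 * pb w.1 * pc k1 w.1 w.2 :=
                ENNReal.tsum_prod'
            _ = ∑' k1 : ℤ, ∑' k2 : ℤ, ∑' k3 : ℤ, pa k1 * pb k2 * pc k1 k2 k3 := by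
                refine tsum_congr fun k1 => ?_
                exact ENNReal.tsum_prod'
            _ = ∑' k1 : ℤ, ∑' k2 : ℤ, (pa k1 * pb k2) * ∑' k3 : ℤ, pc k1 k2 k3 := by
                refine tsum_congr fun k1 => tsum_congr fun k2 => ?_
                exact ENNReal.tsum_mul_left
            _ ≤ ∑' k1 : ℤ, ∑' k2 : ℤ, (pa k1 * pb k2) * E1 := by
                refine ENNReal.tsum_le_tsum fun k1 => ENNReal.tsum_le_tsum fun k2 => ?_
                exact mul_le_mul_right (sum_c k1 k2) _
            _ = ∑' k1 : ℤ, (∑' k2 : ℤ, pb k2 * E1) * pa k1 := by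
                refine tsum_congr fun k1 => ?_
                rw [← ENNReal.tsum_mul_right]
                refine tsum_congr fun k2 => by ring
            _ ≤ ∑' k1 : ℤ, (E1 * E1) * pa k1 := by
                refine ENNReal.tsum_le_tsum fun k1 => ?_
                apply mul_le_mul_left
                calc ∑' k2 : ℤ, pb k2 * E1 = (∑' k2 : ℤ, pb k2) * E1 :=
                      ENNReal.tsum_mul_right
                  _ ≤ E1 * E1 := mul_le_mul_left sum_b _
            _ = (E1 * E1) * ∑' k1 : ℤ, pa k1 := ENNReal.tsum_mul_left
            _ ≤ (E1 * E1) * E1 := mul_le_mul_right sum_a _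
            _ = E1 * E1 * E1 := by ring
      _ = ENNReal.ofReal ((2048 * c1 ^ 3) * D) := by
          have hc1 : (0:ℝ) ≤ 4 * c1 := by nlinarith [c1_pos]
          rw [hE1, ← ENNReal.ofReal_mul hc1, ← ENNReal.ofReal_mul (mul_nonneg hc1 hc1),
            ← ENNReal.ofReal_mul (mul_nonneg hDpos.le (by norm_num : (0:ℝ) ≤ 32))]
          congr 1
          ring
  have hne : ∑' k : ℤ×ℤ×ℤ, ENNReal.ofReal (F k) ≠ ⊤ :=
    ne_top_of_le_ne_top ENNReal.ofReal_ne_top total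
  have hsummable : Summable F := by
    have h := ENNReal.summable_toReal hne
    refine (summable_congr fun k => ?_).mp h
    exact ENNReal.toReal_ofReal (hFnn k)
  refine ⟨hsummable, ?_⟩
  have htsum : ∑' k : ℤ×ℤ×ℤ, F k = (∑' k : ℤ×ℤ×ℤ, ENNReal.ofReal (F k)).toReal := by
    rw [ENNReal.tsum_toReal_eq (fun k => ENNReal.ofReal_ne_top)]
    exact tsum_congr fun k => (ENNReal.toReal_ofReal (hFnn k)).symm
  calc ∑' k : ℤ×ℤ×ℤ, F k
      = (∑' k : ℤ×ℤ×ℤ, ENNReal.ofReal (F k)).toReal := htsum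
    _ ≤ (ENNReal.ofReal ((2048 * c1 ^ 3) * D)).toReal :=
        ENNReal.toReal_mono ENNReal.ofReal_ne_top total
    _ = (2048 * c1 ^ 3) * D := ENNReal.toReal_ofReal
        (by have := c1_pos; positivity)
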